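/- Let f : ℝⁿ → ℝ be differentiable with coordinate-wise Lipschitz gradient with constants L_1,…,L_n > 0, let S = ∑_{i=1}^n L_i, and let p_i = L_i/S be the importance sampling probabilities. Then for every x ∈ ℝⁿ, ∑_{i=1}^n p_i · min( f(x + t_i e_i), f(x − t_i e_i) ) ≤ f(x) − ‖∇f(x)‖₂² / (2S), where t_i = |∂_i f(x)| / L_i. -/

import Mathlib

/-- Descent lemma in 1D for nonnegative step. -/
lemma descent1d (φ φ' : ℝ → ℝ) (hd : ∀ s, HasDerivAt φ (φ' s) s)
    (Lc : ℝ) (hLc : 0 ≤ Lc) (hlip : ∀ u v : ℝ, |φ' u - φ' v| ≤ Lc * |u - v|)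
    (t : ℝ) (ht : 0 ≤ t) :
    φ t ≤ φ 0 + φ' 0 * t + Lc * t ^ 2 / 2 := by
  have hcont : Continuous φ' := by
    have : LipschitzWith (Real.toNNReal Lc) φ' := by
      rw [lipschitzWith_iff_dist_le_mul]
      intro u v
      simpa [Real.dist_eq, Real.coe_toNNReal _ hLc] using hlip u v
    exact this.continuous
  have hint : ∀ a b : ℝ, IntervalIntegrable φ' MeasureTheory.volume a b :=
    fun a b => hcont.intervalIntegrable a b
  have heq : ∫ u in (0:ℝ)..t, φ' u = φ t - φ 0 := by
    exact intervalIntegral.integral_eq_sub_of_hasDerivAt (fun u _ => hd u) (hint 0 t)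
  have hmono : ∫ u in (0:ℝ)..t, φ' u ≤ ∫ u in (0:ℝ)..t, (φ' 0 + Lc * u) := by
    apply intervalIntegral.integral_mono_on ht (hint 0 t)
    · exact (continuous_const.add (continuous_const.mul continuous_id)).intervalIntegrable 0 t
    · intro u hu
      have h1 := hlip u 0
      have hu0 : 0 ≤ u := hu.1
      have : φ' u - φ' 0 ≤ Lc * u := by
        calc φ' u - φ' 0 ≤ |φ' u - φ' 0| := le_abs_self _
        _ ≤ Lc * |u - 0| := h1
        _ = Lc * u := by rw [sub_zero, abs_of_nonneg hu0]
      linarith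
  have hval : ∫ u in (0:ℝ)..t, (φ' 0 + Lc * u) = φ' 0 * t + Lc * t ^ 2 / 2 := by
    have : ∀ u : ℝ, HasDerivAt (fun v => φ' 0 * v + Lc * v ^ 2 / 2) (φ' 0 + Lc * u) u := by
      intro u
      have h1 : HasDerivAt (fun v : ℝ => φ' 0 * v) (φ' 0) u := by
        simpa using (hasDerivAt_id u).const_mul (φ' 0)
      have h2 : HasDerivAt (fun v : ℝ => Lc * v ^ 2 / 2) (Lc * u) u := by
        have := ((hasDerivAt_pow 2 u).const_mul Lc).div_const 2
        simpa using this.congr_deriv (by push_cast; ring)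
      exact h1.add h2
    rw [intervalIntegral.integral_eq_sub_of_hasDerivAt (fun u _ => this u)
      ((continuous_const.add (continuous_const.mul continuous_id)).intervalIntegrable 0 t)]
    ring
  have := heq ▸ hmono
  linarith [hval ▸ this]

/-- Per-coordinate bound: along direction `v` with derivative Lipschitz constant `Lc`,
taking step `|g|/Lc` in the best sign direction decreases `f` by `g²/(2Lc)`. -/
lemma coord_min_bound (n : ℕ) (f : (Fin n → ℝ) → ℝ) (hf : Differentiable ℝ f)
    (v : Fin n → ℝ) (Lc : ℝ) (hLc : 0 < Lc)
    (hlip : ∀ (x : Fin n → ℝ) (h : ℝ),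
      |fderiv ℝ f (x + h • v) v - fderiv ℝ f x v| ≤ Lc * |h|)
    (x : Fin n → ℝ) :
    min (f (x + (|fderiv ℝ f x v| / Lc) • v)) (f (x - (|fderiv ℝ f x v| / Lc) • v))
      ≤ f x - (fderiv ℝ f x v) ^ 2 / (2 * Lc) := by
  set g := fderiv ℝ f x v with hg
  set t := |g| / Lc with htdef
  have ht : 0 ≤ t := div_nonneg (abs_nonneg _) hLc.le
  -- the line function
  set φ : ℝ → ℝ := fun s => f (x + s • v) with hφ
  set φ' : ℝ → ℝ := fun s => fderiv ℝ f (x + s • v) v with hφ'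
  have hd : ∀ s, HasDerivAt φ (φ' s) s := by
    intro s
    have hline : HasDerivAt (fun s : ℝ => x + s • v) v s := by
      exact (((hasDerivAt_id' s).smul_const v).const_add x).congr_deriv (one_smul ℝ v)
    exact ((hf (x + s • v)).hasFDerivAt.comp_hasDerivAt s hline)
  have hlip' : ∀ u w : ℝ, |φ' u - φ' w| ≤ Lc * |u - w| := by
    intro u w
    have := hlip (x + w • v) (u - w)
    simpa [hφ', add_assoc, ← add_smul, sub_add_cancel] using this
  have hφ0 : φ 0 = f x := by simp [hφ]
  have hφ'0 : φ' 0 = g := by simp [hφ', hg]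
  have hpos : φ t ≤ f x + g * t + Lc * t ^ 2 / 2 := by
    have := descent1d φ φ' hd Lc hLc.le hlip' t ht
    rwa [hφ0, hφ'0] at this
  have hneg : φ (-t) ≤ f x - g * t + Lc * t ^ 2 / 2 := by
    have hd' : ∀ s, HasDerivAt (fun s => φ (-s)) (-(φ' (-s))) s := by
      intro s
      exact ((hd (-s)).comp s (hasDerivAt_neg s)).congr_deriv (by ring)
    have hlip'' : ∀ u w : ℝ, |(-(φ' (-u))) - (-(φ' (-w)))| ≤ Lc * |u - w| := by
      intro u w
      have h := hlip' (-u) (-w)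
      have e2 : (-u) - (-w) = -(u - w) := by ring
      rw [e2, abs_neg] at h
      rw [show (-(φ' (-u))) - (-(φ' (-w))) = -(φ' (-u) - φ' (-w)) from by ring, abs_neg]
      exact h
    have := descent1d (fun s => φ (-s)) (fun s => -(φ' (-s))) hd' Lc hLc.le hlip'' t ht
    simp only [neg_zero, hφ0, hφ'0] at this
    linarith
  have hLt : Lc * t ^ 2 / 2 = g ^ 2 / (2 * Lc) := by
    rw [htdef, div_pow, sq_abs]
    field_simp
  have habs : |g| * t = g ^ 2 / Lc := by
    rw [htdef, ← sq_abs g]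
    ring
  have hmin : min (φ t) (φ (-t)) ≤ f x - g ^ 2 / (2 * Lc) := by
    rcases le_or_gt 0 g with hge | hgl
    · have : φ (-t) ≤ f x - g ^ 2 / (2 * Lc) := by
        have hgt : g * t = g ^ 2 / Lc := by rw [abs_of_nonneg hge] at habs; exact habs
        rw [hgt, hLt] at hneg
        have heq2 : g ^ 2 / Lc - g ^ 2 / (2 * Lc) = g ^ 2 / (2 * Lc) := by
          field_simp; ring
        linarith [hneg]
      exact le_trans (min_le_right _ _) this
    · have : φ t ≤ f x - g ^ 2 / (2 * Lc) := by
        have hgt : g * t = -(g ^ 2 / Lc) := by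
          have : |g| = -g := abs_of_neg hgl
          rw [this] at habs; linarith [habs]
        rw [hgt, hLt] at hpos
        have heq2 : g ^ 2 / Lc - g ^ 2 / (2 * Lc) = g ^ 2 / (2 * Lc) := by
          field_simp; ring
        linarith [hpos]
      exact le_trans (min_le_left _ _) this
  have e1 : x + t • v = x + (|fderiv ℝ f x v| / Lc) • v := by rw [htdef, hg]
  have e2 : x + (-t) • v = x - (|fderiv ℝ f x v| / Lc) • v := by
    rw [htdef, hg]; simp [sub_eq_add_neg, neg_smul]
  simpa [hφ, e1, e2, hg, ← sub_eq_add_neg] using hmin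

/-- Expected decrease of `STP_IS` with the optimal coordinate stepsizes
`tᵢ = |∂ᵢf(x)|/Lᵢ` and importance sampling probabilities `pᵢ = Lᵢ/S`:
`∑ᵢ pᵢ min(f(x + tᵢeᵢ), f(x − tᵢeᵢ)) ≤ f(x) − ‖∇f(x)‖₂²/(2S)`. -/
theorem stp_is_expected_decrease_optimal_stepsize
    (n : ℕ) (hn : 0 < n) (f : (Fin n → ℝ) → ℝ) (hf : Differentiable ℝ f)
    (L : Fin n → ℝ) (hL : ∀ i, 0 < L i)
    (hlip : ∀ (i : Fin n) (x : Fin n → ℝ) (h : ℝ),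
      |fderiv ℝ f (x + h • (Pi.single i 1 : Fin n → ℝ)) ((Pi.single i 1 : Fin n → ℝ))
          - fderiv ℝ f x ((Pi.single i 1 : Fin n → ℝ))| ≤ L i * |h|) :
    ∀ x : Fin n → ℝ,
      ∑ i, (L i / ∑ j, L j) *
        min (f (x + (|fderiv ℝ f x ((Pi.single i 1 : Fin n → ℝ))| / L i) • (Pi.single i 1 : Fin n → ℝ)))
            (f (x - (|fderiv ℝ f x ((Pi.single i 1 : Fin n → ℝ))| / L i) • (Pi.single i 1 : Fin n → ℝ)))
        ≤ f x - (∑ i, (fderiv ℝ f x ((Pi.single i 1 : Fin n → ℝ))) ^ 2) / (2 * ∑ j, L j) := by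
  intro x
  set S := ∑ j, L j with hS
  have hSpos : 0 < S := Finset.sum_pos (fun i _ => hL i) ⟨⟨0, hn⟩, Finset.mem_univ _⟩
  have key : ∀ i : Fin n,
      min (f (x + (|fderiv ℝ f x ((Pi.single i 1 : Fin n → ℝ))| / L i) • (Pi.single i 1 : Fin n → ℝ)))
          (f (x - (|fderiv ℝ f x ((Pi.single i 1 : Fin n → ℝ))| / L i) • (Pi.single i 1 : Fin n → ℝ)))
        ≤ f x - (fderiv ℝ f x ((Pi.single i 1 : Fin n → ℝ))) ^ 2 / (2 * L i) :=
    fun i => coord_min_bound n f hf _ (L i) (hL i) (hlip i) x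
  calc ∑ i, (L i / S) *
        min (f (x + (|fderiv ℝ f x ((Pi.single i 1 : Fin n → ℝ))| / L i) • (Pi.single i 1 : Fin n → ℝ)))
            (f (x - (|fderiv ℝ f x ((Pi.single i 1 : Fin n → ℝ))| / L i) • (Pi.single i 1 : Fin n → ℝ)))
      ≤ ∑ i, (L i / S) * (f x - (fderiv ℝ f x ((Pi.single i 1 : Fin n → ℝ))) ^ 2 / (2 * L i)) := by
        apply Finset.sum_le_sum
        intro i _
        exact mul_le_mul_of_nonneg_left (key i) (div_nonneg (hL i).le hSpos.le)
    _ = f x - (∑ i, (fderiv ℝ f x ((Pi.single i 1 : Fin n → ℝ))) ^ 2) / (2 * S) := by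
        have hexp : ∀ i : Fin n,
            (L i / S) * (f x - (fderiv ℝ f x ((Pi.single i 1 : Fin n → ℝ))) ^ 2 / (2 * L i))
            = (L i / S) * f x - (fderiv ℝ f x ((Pi.single i 1 : Fin n → ℝ))) ^ 2 / (2 * S) := by
          intro i
          have hLne := (hL i).ne'
          have hSne := hSpos.ne'
          field_simp
        simp only [hexp]
        rw [Finset.sum_sub_distrib, ← Finset.sum_mul, ← Finset.sum_div, ← Finset.sum_div,
          ← hS, div_self hSpos.ne', one_mul]
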